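/- Vanishing of the antisymmetric coupling contribution: Let δ : Fin n → Fin n → ℝ be an antisymmetric matrix (δ j k = −δ k j) with zero row sums (Σ_k δ j k = 0 for each j), and let u : Fin n → E be a map into a real inner product space. Setting w i j = u j − u i, one has Σ_{i,j,k} ⟨w i j, δ j k • w j k − δ i k • w i k⟩ = 0. -/

import Mathlib

open Finset

/-- The antisymmetric part of the coupling contributes nothing. -/
theorem antisymmetric_coupling_vanishes {E : Type*} [NormedAddCommGroup E]
    [InnerProductSpace ℝ E] (n : ℕ) (δ : Fin n → Fin n → ℝ) (u : Fin n → E)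
    (hanti : ∀ j k, δ j k = -δ k j)
    (hrow : ∀ j, ∑ k, δ j k = 0) :
    ∑ i, ∑ j, ∑ k,
      (inner ℝ ((u j - u i)) (δ j k • (u k - u j) - δ i k • (u k - u i)) : ℝ) = 0 := by
  set P : Fin n → Fin n → ℝ := fun a b => inner ℝ (u a) (u b) with hP
  have hPsymm : ∀ a b, P a b = P b a := fun a b => real_inner_comm _ _
  have hcol : ∀ k, ∑ i, δ i k = 0 := by
    intro k
    have : ∑ i, δ i k = -∑ i, δ k i := by
      rw [← Finset.sum_neg_distrib]
      exact Finset.sum_congr rfl fun i _ => hanti i k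
    rw [this, hrow, neg_zero]
  have hskew : ∑ a, ∑ b, δ a b * P a b = 0 := by
    have h2 : (∑ a, ∑ b, δ a b * P a b) + (∑ a, ∑ b, δ a b * P a b) = 0 := by
      nth_rewrite 2 [Finset.sum_comm]
      rw [← Finset.sum_add_distrib]
      refine Finset.sum_eq_zero fun a _ => ?_
      rw [← Finset.sum_add_distrib]
      refine Finset.sum_eq_zero fun b _ => ?_
      rw [hanti a b, hPsymm a b]; ring
    linarith
  have expand : ∀ i j k : Fin n,
      (inner ℝ ((u j - u i)) (δ j k • (u k - u j) - δ i k • (u k - u i)) : ℝ) =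
      δ j k * P j k - δ j k * P j j - δ j k * P i k + δ j k * P i j
      - δ i k * P j k + δ i k * P j i + δ i k * P i k - δ i k * P i i := by
    intro i j k
    simp only [hP, inner_sub_left, inner_sub_right, inner_smul_right]
    ring
  simp only [expand]
  -- split the big sum into eight triple sums
  simp only [Finset.sum_sub_distrib, Finset.sum_add_distrib]
  have T1 : ∑ i : Fin n, ∑ j, ∑ k, δ j k * P j k = 0 := by
    refine Finset.sum_eq_zero fun i _ => hskew
  have T2 : ∑ i : Fin n, ∑ j, ∑ k, δ j k * P j j = 0 := by
    refine Finset.sum_eq_zero fun i _ => Finset.sum_eq_zero fun j _ => ?_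
    rw [← Finset.sum_mul, hrow, zero_mul]
  have T3 : ∑ i : Fin n, ∑ j, ∑ k, δ j k * P i k = 0 := by
    refine Finset.sum_eq_zero fun i _ => ?_
    rw [Finset.sum_comm]
    refine Finset.sum_eq_zero fun k _ => ?_
    rw [← Finset.sum_mul, hcol, zero_mul]
  have T4 : ∑ i : Fin n, ∑ j, ∑ k, δ j k * P i j = 0 := by
    refine Finset.sum_eq_zero fun i _ => Finset.sum_eq_zero fun j _ => ?_
    rw [← Finset.sum_mul, hrow, zero_mul]
  have T5 : ∑ i : Fin n, ∑ j, ∑ k, δ i k * P j k = 0 := by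
    rw [Finset.sum_comm]
    refine Finset.sum_eq_zero fun j _ => ?_
    rw [Finset.sum_comm]
    refine Finset.sum_eq_zero fun k _ => ?_
    rw [← Finset.sum_mul, hcol, zero_mul]
  have T6 : ∑ i : Fin n, ∑ j, ∑ k, δ i k * P j i = 0 := by
    refine Finset.sum_eq_zero fun i _ => Finset.sum_eq_zero fun j _ => ?_
    rw [← Finset.sum_mul, hrow, zero_mul]
  have T7 : ∑ i : Fin n, ∑ j : Fin n, ∑ k, δ i k * P i k = 0 := by
    have h : ∑ i : Fin n, ∑ j : Fin n, ∑ k, δ i k * P i k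
        = ∑ i : Fin n, (n : ℝ) * ∑ k, δ i k * P i k := by
      refine Finset.sum_congr rfl fun i _ => ?_
      rw [Finset.sum_const, Finset.card_univ, Fintype.card_fin, nsmul_eq_mul]
    rw [h, ← Finset.mul_sum, hskew, mul_zero]
  have T8 : ∑ i : Fin n, ∑ j : Fin n, ∑ k, δ i k * P i i = 0 := by
    refine Finset.sum_eq_zero fun i _ => Finset.sum_eq_zero fun j _ => ?_
    rw [← Finset.sum_mul, hrow, zero_mul]
  rw [T1, T2, T3, T4, T5, T6, T7, T8]
  ring
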